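/- Let g ∈ ℝ[x_1,…,x_n] and define f(x_1,…,x_n) = g(x_1^2,…,x_n^2). Then f is a sum of squares of polynomials if and only if g belongs to the preordering generated by x_1,…,x_n, i.e., g can be written as Σ_{e ∈ {0,1}^n} σ_e · x_1^{e_1} ⋯ x_n^{e_n} with each σ_e a sum of squares of polynomials. -/

import Mathlib

open MvPolynomial Finset

/-- Sum of squares of polynomials. -/
def IsSos {n : ℕ} (f : MvPolynomial (Fin n) ℝ) : Prop :=
  ∃ (k : ℕ) (h : Fin k → MvPolynomial (Fin n) ℝ), f = ∑ i, h i ^ 2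

/-- Membership in the preordering generated by x_1, …, x_n. -/
def InPreordering {n : ℕ} (g : MvPolynomial (Fin n) ℝ) : Prop :=
  ∃ σ : (Fin n → Bool) → MvPolynomial (Fin n) ℝ,
    (∀ e, IsSos (σ e)) ∧
    g = ∑ e : Fin n → Bool, σ e * ∏ i, if e i then X i else 1

namespace SosAux

variable {n : ℕ}

/-- The substitution `xᵢ ↦ xᵢ²`. -/
noncomputable def phi (n : ℕ) : MvPolynomial (Fin n) ℝ →ₐ[ℝ] MvPolynomial (Fin n) ℝ :=
  bind₁ (fun i => X i ^ 2)

/-- The sign flip `xᵢ ↦ ± xᵢ`. -/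
noncomputable def psi (s : Fin n → Bool) :
    MvPolynomial (Fin n) ℝ →ₐ[ℝ] MvPolynomial (Fin n) ℝ :=
  bind₁ (fun i => if s i then -X i else X i)

/-- The square-free monomial `x^e`. -/
noncomputable def xe (e : Fin n → Bool) : MvPolynomial (Fin n) ℝ :=
  ∏ i, if e i then X i else 1

noncomputable def sgn (s e : Fin n → Bool) : ℝ :=
  ∏ i, if s i && e i then -1 else 1

lemma monomial_univ (d : Fin n →₀ ℕ) (r : ℝ) :
    (monomial d r : MvPolynomial (Fin n) ℝ) = C r * ∏ i, X i ^ d i := by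
  rw [monomial_eq, Finsupp.prod_fintype]
  intro i; exact pow_zero _

lemma phi_monomial (d : Fin n →₀ ℕ) (r : ℝ) :
    phi n (monomial d r) = monomial (2 • d) r := by
  rw [monomial_univ, monomial_univ, map_mul, map_prod]
  simp only [map_pow, phi, bind₁_X_right, algHom_C]
  congr 1
  refine Finset.prod_congr rfl fun i _ => ?_
  rw [← pow_mul, Finsupp.smul_apply, smul_eq_mul]

lemma coeff_phi (p : MvPolynomial (Fin n) ℝ) (d : Fin n →₀ ℕ) :
    coeff (2 • d) (phi n p) = coeff d p := by
  induction p using MvPolynomial.induction_on' with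
  | monomial d' r =>
    rw [phi_monomial, coeff_monomial, coeff_monomial]
    by_cases h : d' = d
    · simp [h]
    · rw [if_neg, if_neg h]
      intro hc
      apply h
      ext i
      have := DFunLike.congr_fun hc i
      simp only [Finsupp.smul_apply, smul_eq_mul] at this
      omega
  | add p q hp hq => simp [map_add, coeff_add, hp, hq]

lemma phi_inj : Function.Injective (phi n) := by
  intro p q h
  ext d
  rw [← coeff_phi p d, h, coeff_phi]

lemma psi_phi (s : Fin n → Bool) (p : MvPolynomial (Fin n) ℝ) :
    psi s (phi n p) = phi n p := by
  have : (fun i => psi s ((X i : MvPolynomial (Fin n) ℝ) ^ 2)) =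
      fun i => (X i : MvPolynomial (Fin n) ℝ) ^ 2 := by
    funext i
    rw [map_pow, psi, bind₁_X_right]
    cases hs : s i <;> simp
  rw [phi, psi, bind₁_bind₁]
  show (bind₁ fun i => psi s ((X i : MvPolynomial (Fin n) ℝ) ^ 2)) p = _
  rw [this]

lemma psi_xe (s e : Fin n → Bool) : psi s (xe e) = C (sgn s e) * xe e := by
  have hC : (C (sgn s e) : MvPolynomial (Fin n) ℝ) =
      ∏ i, C (if s i && e i then (-1 : ℝ) else 1) := by
    rw [sgn, map_prod]
  rw [xe, map_prod, hC, ← Finset.prod_mul_distrib]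
  refine Finset.prod_congr rfl fun i _ => ?_
  cases he : e i <;> cases hs : s i <;>
    simp [psi, bind₁_X_right, hs, he]

lemma sum_sgn (e e' : Fin n → Bool) :
    ∑ s : Fin n → Bool, sgn s e * sgn s e' = if e = e' then (2 : ℝ) ^ n else 0 := by
  have h1 : ∀ s : Fin n → Bool, sgn s e * sgn s e' =
      ∏ i, ((if s i && e i then (-1 : ℝ) else 1) * (if s i && e' i then -1 else 1)) := by
    intro s; rw [sgn, sgn, Finset.prod_mul_distrib]
  simp only [h1]
  rw [← Fintype.prod_sum
    (fun i (b : Bool) => (if b && e i then (-1 : ℝ) else 1) * (if b && e' i then -1 else 1))]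
  have h2 : ∀ i, (∑ b : Bool,
      (if b && e i then (-1 : ℝ) else 1) * (if b && e' i then -1 else 1)) =
      if e i = e' i then 2 else 0 := by
    intro i
    cases he : e i <;> cases he' : e' i <;> simp <;> norm_num
  rw [Finset.prod_congr rfl fun i _ => h2 i]
  by_cases h : e = e'
  · simp [h, Finset.prod_const]
  · obtain ⟨i, hi⟩ := Function.ne_iff.mp h
    rw [if_neg h]
    exact Finset.prod_eq_zero (mem_univ i) (by simp [hi])

lemma phi_xe (e : Fin n → Bool) : phi n (xe e) = xe e * xe e := by
  rw [xe, map_prod, ← Finset.prod_mul_distrib]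
  refine Finset.prod_congr rfl fun i _ => ?_
  cases he : e i <;> simp [phi, bind₁_X_right, sq]

/-- Decomposition into parity components. -/
lemma decomp (h : MvPolynomial (Fin n) ℝ) :
    ∃ q : (Fin n → Bool) → MvPolynomial (Fin n) ℝ, h = ∑ e, xe e * phi n (q e) := by
  induction h using MvPolynomial.induction_on' with
  | add p p' hp hp' =>
    obtain ⟨qp, hqp⟩ := hp
    obtain ⟨qq, hqq⟩ := hp'
    exact ⟨fun e => qp e + qq e, by
      simp [hqp, hqq, map_add, mul_add, Finset.sum_add_distrib]⟩
  | monomial d r =>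
    set e : Fin n → Bool := fun i => decide (d i % 2 = 1) with he
    set d2 : Fin n →₀ ℕ := Finsupp.mapRange (· / 2) (by simp) d with hd2
    refine ⟨fun e' => if e' = e then monomial d2 r else 0, ?_⟩
    rw [Finset.sum_eq_single e (fun e' _ hne => by simp only [if_neg hne, map_zero, mul_zero])
      (fun hne => absurd (mem_univ e) hne)]
    simp only [if_pos rfl, if_true]
    symm
    rw [phi_monomial, monomial_univ, monomial_univ, xe, mul_left_comm,
      ← mul_assoc]
    rw [mul_assoc, ← Finset.prod_mul_distrib]
    congr 1
    refine Finset.prod_congr rfl fun i _ => ?_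
    have hd2i : (2 • d2) i = 2 * (d i / 2) := by
      rw [Finsupp.smul_apply, hd2, Finsupp.mapRange_apply, smul_eq_mul]
    rw [hd2i]
    rcases Nat.mod_two_eq_zero_or_one (d i) with h0 | h1
    · have : e i = false := by simp [he, h0]
      rw [this]
      simp only [Bool.false_eq_true, if_false, one_mul]
      congr 1
      omega
    · have : e i = true := by simp [he, h1]
      rw [this, if_pos rfl, ← pow_succ']
      congr 1
      omega

/-- The averaging operator over all sign flips. -/
noncomputable def Eop (n : ℕ) : MvPolynomial (Fin n) ℝ →ₗ[ℝ] MvPolynomial (Fin n) ℝ :=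
  ((2 : ℝ) ^ n)⁻¹ • ∑ s : Fin n → Bool, (psi s).toLinearMap

lemma Eop_apply (p : MvPolynomial (Fin n) ℝ) :
    Eop n p = ((2 : ℝ) ^ n)⁻¹ • ∑ s : Fin n → Bool, psi s p := by
  simp [Eop, LinearMap.sum_apply]

lemma Eop_phi (p : MvPolynomial (Fin n) ℝ) : Eop n (phi n p) = phi n p := by
  rw [Eop_apply]
  simp only [psi_phi]
  rw [Finset.sum_const, card_univ, Fintype.card_fun, Fintype.card_bool, Fintype.card_fin,
    ← Nat.cast_smul_eq_nsmul ℝ, smul_smul]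
  push_cast
  rw [inv_mul_cancel₀ (by positivity), one_smul]

lemma Eop_key (e e' : Fin n → Bool) (p : MvPolynomial (Fin n) ℝ) :
    Eop n (xe e * xe e' * phi n p) =
      if e = e' then xe e * xe e' * phi n p else 0 := by
  have h1 : ∀ s : Fin n → Bool, psi s (xe e * xe e' * phi n p) =
      C (sgn s e * sgn s e') * (xe e * xe e' * phi n p) := by
    intro s
    rw [map_mul, map_mul, psi_xe, psi_xe, psi_phi, map_mul]
    ring
  rw [Eop_apply]
  simp only [h1]
  rw [← Finset.sum_mul, ← map_sum, sum_sgn]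
  by_cases h : e = e'
  · rw [if_pos h, if_pos h, ← smul_eq_C_mul, smul_smul,
      inv_mul_cancel₀ (by positivity), one_smul]
  · rw [if_neg h, if_neg h, map_zero, zero_mul, smul_zero]

lemma isSos_sum {ι : Type} [Fintype ι] {f : ι → MvPolynomial (Fin n) ℝ}
    (hf : ∀ e, IsSos (f e)) : IsSos (∑ e, f e) := by
  choose k h hh using hf
  refine ⟨Fintype.card (Σ e : ι, Fin (k e)),
    fun j => h ((Fintype.equivFin _).symm j).1 ((Fintype.equivFin _).symm j).2, ?_⟩
  rw [Fintype.sum_equiv ((Fintype.equivFin (Σ e : ι, Fin (k e))).symm)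
    _ (fun t => h t.1 t.2 ^ 2) (fun j => rfl)]
  rw [← Finset.univ_sigma_univ, Finset.sum_sigma]
  exact Finset.sum_congr rfl fun e _ => (hh e).symm ▸ rfl

theorem forward (g : MvPolynomial (Fin n) ℝ) (hg : IsSos (phi n g)) : InPreordering g := by
  obtain ⟨k, h, hh⟩ := hg
  choose q hq using fun i => decomp (h i)
  refine ⟨fun e => ∑ i, q i e ^ 2, fun e => ⟨k, fun i => q i e, rfl⟩, ?_⟩
  apply phi_inj
  have hsq : ∀ i, h i ^ 2 = ∑ e, ∑ e', xe e * xe e' * phi n (q i e * q i e') := by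
    intro i
    rw [sq, hq i, Finset.sum_mul_sum]
    exact Finset.sum_congr rfl fun e _ => Finset.sum_congr rfl fun e' _ => by
      rw [map_mul]; ring
  calc phi n g = Eop n (phi n g) := (Eop_phi g).symm
    _ = ∑ i, ∑ e, xe e * xe e * phi n (q i e ^ 2) := by
        rw [hh, map_sum]
        refine Finset.sum_congr rfl fun i _ => ?_
        rw [hsq i, map_sum]
        refine Finset.sum_congr rfl fun e _ => ?_
        rw [map_sum, Finset.sum_eq_single e
          (fun e' _ hne => by rw [Eop_key, if_neg (fun hc => hne hc.symm)])
          (fun hne => absurd (mem_univ e) hne)]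
        rw [Eop_key, if_pos rfl, sq (q i e)]
    _ = phi n (∑ e, (∑ i, q i e ^ 2) * xe e) := by
        rw [Finset.sum_comm, map_sum]
        refine Finset.sum_congr rfl fun e _ => ?_
        rw [map_mul, phi_xe, map_sum, Finset.sum_mul]
        exact Finset.sum_congr rfl fun i _ => mul_comm _ _

theorem backward (g : MvPolynomial (Fin n) ℝ) (hp : InPreordering g) : IsSos (phi n g) := by
  obtain ⟨σ, hσ, rfl⟩ := hp
  rw [map_sum]
  refine isSos_sum fun e => ?_
  obtain ⟨k, h, hh⟩ := hσ e
  refine ⟨k, fun i => phi n (h i) * xe e, ?_⟩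
  rw [map_mul,
    show (∏ i, if e i then (X i : MvPolynomial (Fin n) ℝ) else 1) = xe e from rfl,
    phi_xe, hh, map_sum, Finset.sum_mul]
  refine Finset.sum_congr rfl fun i _ => ?_
  rw [map_pow]; ring

end SosAux

theorem sos_of_squares_iff_preordering (n : ℕ) (g : MvPolynomial (Fin n) ℝ) :
    IsSos (bind₁ (fun i : Fin n => (X i : MvPolynomial (Fin n) ℝ) ^ 2) g) ↔
      InPreordering g :=
  ⟨fun hs => SosAux.forward g hs, fun hp => SosAux.backward g hp⟩
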